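/- (Nontriviality of the Bernstein–Sato ideal, a consequence of Theorem 4.2(i).) Let m = (m₁,…,m_r) ∈ ℕ^r be such that f₁^{m₁}⋯f_r^{m_r} is nonconstant. Then B_F^m is a proper ideal of ℂ[s₁,…,s_r]; equivalently, its zero locus Z(B_F^m) ⊆ ℂ^r is nonempty. -/

import Mathlib

set_option synthInstance.maxHeartbeats 1000000
set_option maxHeartbeats 2000000
noncomputable section
open MvPolynomial

/-! ## The ring `R = ℂ[x₁,…,xₙ]`, its localization `R_f`, and the extension of `∂/∂xᵢ`
to `R_f` (constructed via the universal property of the localization, using dual numbers;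
this is the unique extension, given by the quotient rule). -/

variable {n r : ℕ}

/-- The ring homomorphism `R → R_f[ε]`, `a ↦ a + (∂a/∂xᵢ)ε`. -/
def BSpsi (f : MvPolynomial (Fin n) ℂ) (i : Fin n) :
    MvPolynomial (Fin n) ℂ →+* TrivSqZeroExt (Localization.Away f) (Localization.Away f) where
  toFun a := ⟨algebraMap _ _ a, algebraMap _ _ (pderiv i a)⟩
  map_one' := by
    refine TrivSqZeroExt.ext ?_ ?_ <;> simp
  map_mul' a b := by
    refine TrivSqZeroExt.ext ?_ ?_
    · erw [TrivSqZeroExt.fst_mul]; exact map_mul (algebraMap _ (Localization.Away f)) a b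
    · change algebraMap _ _ (pderiv i (a * b)) = algebraMap _ (Localization.Away f) a
          • algebraMap _ (Localization.Away f) (pderiv i b)
        + MulOpposite.op (algebraMap _ (Localization.Away f) b)
          • algebraMap _ (Localization.Away f) (pderiv i a)
      rw [pderiv_mul, map_add, map_mul, map_mul]
      simp [smul_eq_mul, MulOpposite.smul_eq_mul_unop]
      ring
  map_zero' := by
    refine TrivSqZeroExt.ext ?_ ?_ <;> simp
  map_add' a b := by
    refine TrivSqZeroExt.ext ?_ ?_
    · erw [TrivSqZeroExt.fst_add]; exact map_add (algebraMap _ (Localization.Away f)) a b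
    · exact (by rw [map_add, map_add] : algebraMap _ (Localization.Away f) (pderiv i (a + b))
        = algebraMap _ _ (pderiv i a) + algebraMap _ _ (pderiv i b))

lemma BSpsi_isUnit (f : MvPolynomial (Fin n) ℂ) (i : Fin n) : IsUnit (BSpsi f i f) := by
  rw [TrivSqZeroExt.isUnit_iff_isUnit_fst]
  exact IsLocalization.Away.algebraMap_isUnit f

/-- The lift of `BSpsi` to the localization `R_f → R_f[ε]`. -/
def BSPhi (f : MvPolynomial (Fin n) ℂ) (i : Fin n) :
    Localization.Away f →+* TrivSqZeroExt (Localization.Away f) (Localization.Away f) :=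
  IsLocalization.Away.lift f (BSpsi_isUnit f i)

lemma BSPhi_algebraMap (f : MvPolynomial (Fin n) ℂ) (i : Fin n) (a : MvPolynomial (Fin n) ℂ) :
    BSPhi f i (algebraMap _ _ a) = BSpsi f i a :=
  IsLocalization.lift_eq _ _

/-- The extension of `∂/∂xᵢ` to the localization `R_f = ℂ[x₁,…,xₙ][1/f]`
(the unique extension, given by the quotient rule), as a `ℂ`-linear endomorphism. -/
def BSderiv (f : MvPolynomial (Fin n) ℂ) (i : Fin n) :
    Module.End ℂ (Localization.Away f) where
  toFun z := (BSPhi f i z).snd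
  map_add' x y := by simp
  map_smul' c z := by
    simp only [RingHom.id_apply]
    rw [show c • z = algebraMap ℂ (Localization.Away f) c * z from Algebra.smul_def c z, map_mul]
    have h1 : algebraMap ℂ (Localization.Away f) c
        = algebraMap (MvPolynomial (Fin n) ℂ) (Localization.Away f) (C c) := by
      rw [IsScalarTower.algebraMap_apply ℂ (MvPolynomial (Fin n) ℂ) (Localization.Away f)]
      simp
    rw [h1, BSPhi_algebraMap]
    rw [TrivSqZeroExt.snd_mul]
    show (algebraMap _ _ (C c)) • _ + (MulOpposite.op (BSPhi f i z).fst)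
      • (algebraMap _ _ (pderiv i (C c))) = _
    simp [Algebra.smul_def, ← h1]

/-! ## The module `M = R_f ⊗_ℂ ℂ[s₁,…,s_r] = R_f[s₁,…,s_r]` and the operators on it. -/

/-- The module `M = R_f ⊗_ℂ ℂ[s₁,…,s_r]`, realized as polynomials in `s₁,…,s_r`
with coefficients in `R_f`. -/
abbrev BSModule (r : ℕ) (f : MvPolynomial (Fin n) ℂ) :=
  MvPolynomial (Fin r) (Localization.Away f)

/-- A `ℂ`-linear endomorphism of `R_f` applied coefficientwise to `M = R_f[s₁,…,s_r]`. -/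
def coeffwise (f : MvPolynomial (Fin n) ℂ) (d : Module.End ℂ (Localization.Away f)) :
    Module.End ℂ (BSModule r f) :=
  (AddMonoidAlgebra.coeffLinearEquiv ℂ).symm.toLinearMap ∘ₗ Finsupp.mapRange.linearMap d
    ∘ₗ (AddMonoidAlgebra.coeffLinearEquiv ℂ).toLinearMap

/-- The element `(∂f_j/∂xᵢ)/f_j` of `R_f`, where `f = f₁⋯f_r`:
it is the fraction with numerator `(∂f_j/∂xᵢ)·∏_{k≠j} f_k` and denominator `f`. -/
def BSdlog (F : Fin r → MvPolynomial (Fin n) ℂ) (i : Fin n) (j : Fin r) :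
    Localization.Away (∏ k, F k) :=
  Localization.mk (pderiv i (F j) * ∏ k ∈ Finset.univ.erase j, F k)
    ⟨∏ k, F k, Submonoid.mem_powers _⟩

/-- The operator `∇ᵢ` on `M = R_f[s₁,…,s_r]`, given by
`∇ᵢ(g) = ∂g/∂xᵢ + (∑_j s_j·(∂f_j/∂xᵢ)/f_j)·g`, i.e. the natural action of `∂/∂xᵢ`
on `g·f₁^{s₁}⋯f_r^{s_r}`. -/
def BSnabla (F : Fin r → MvPolynomial (Fin n) ℂ) (i : Fin n) :
    Module.End ℂ (BSModule r (∏ k, F k)) :=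
  coeffwise _ (BSderiv (∏ k, F k) i)
    + LinearMap.mulLeft ℂ (∑ j, X j * C (BSdlog F i j))

/-- The algebra `D[s] = D_X[s₁,…,s_r]` of operators on `M`: the subalgebra of
`ℂ`-linear endomorphisms of `M` generated by the multiplication operators by elements of `R`,
the multiplication operators by the variables `s_j`, and the operators `∇ᵢ`.
(As a `ℂ`-subalgebra it is generated by these; as a `ℂ[s₁,…,s_r]`-subalgebra it is generated
by the multiplications by elements of `R` together with the `∇ᵢ`.) -/
def BSDalg (F : Fin r → MvPolynomial (Fin n) ℂ) :
    Subalgebra ℂ (Module.End ℂ (BSModule r (∏ k, F k))) :=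
  Algebra.adjoin ℂ
    ((Set.range fun a : MvPolynomial (Fin n) ℂ =>
        LinearMap.mulLeft ℂ (C (algebraMap _ (Localization.Away (∏ k, F k)) a)))
      ∪ (Set.range fun j : Fin r => LinearMap.mulLeft ℂ (X j : BSModule r (∏ k, F k)))
      ∪ (Set.range fun i : Fin n => BSnabla F i))

/-- The Bernstein–Sato ideal `B_F^m ⊆ ℂ[s₁,…,s_r]` (as a subset): all polynomials `b`
such that `b·1` lies in the `D[s]`-submodule of `M` generated by `f₁^{m₁}⋯f_r^{m_r}`,
encoding the functional equation `b(s)·f₁^{s₁}⋯f_r^{s_r} = P·f₁^{s₁+m₁}⋯f_r^{s_r+m_r}`. -/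
def BSideal (F : Fin r → MvPolynomial (Fin n) ℂ) (m : Fin r → ℕ) :
    Set (MvPolynomial (Fin r) ℂ) :=
  {b | ∃ P ∈ BSDalg F,
    P (C (algebraMap _ (Localization.Away (∏ k, F k)) (∏ j, F j ^ m j)))
      = MvPolynomial.map (algebraMap ℂ (Localization.Away (∏ k, F k))) b}

/-- The zero locus in `ℂ^r` of a set of polynomials in `ℂ[s₁,…,s_r]`. -/
def zeroLoc (B : Set (MvPolynomial (Fin r) ℂ)) : Set (Fin r → ℂ) :=
  {α | ∀ b ∈ B, eval α b = 0}

/-- The map `Exp : ℂ^r → (ℂ^*)^r`, `α ↦ exp(2πiα)` componentwise. -/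
def ExpMap (α : Fin r → ℂ) : Fin r → ℂˣ :=
  fun j => Units.mk0 (Complex.exp (2 * Real.pi * Complex.I * α j)) (Complex.exp_ne_zero _)

end


/-! ## Auxiliary development for the proof -/

noncomputable section BSaux
open MvPolynomial

variable {n r : ℕ}

lemma BSPhi_fst (f : MvPolynomial (Fin n) ℂ) (i : Fin n) (z : Localization.Away f) :
    (BSPhi f i z).fst = z := by
  have h : ((TrivSqZeroExt.fstHom ℂ (Localization.Away f)
        (Localization.Away f)).toRingHom.comp (BSPhi f i)) = RingHom.id _ := by
    apply IsLocalization.ringHom_ext (Submonoid.powers f)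
    refine RingHom.ext fun a => ?_
    show (BSPhi f i (algebraMap _ _ a)).fst = algebraMap _ _ a
    rw [BSPhi_algebraMap]
    rfl
  exact RingHom.congr_fun h z

lemma BSderiv_algebraMap (f : MvPolynomial (Fin n) ℂ) (i : Fin n) (a : MvPolynomial (Fin n) ℂ) :
    BSderiv f i (algebraMap _ _ a) = algebraMap _ _ (pderiv i a) := by
  show (BSPhi f i (algebraMap _ _ a)).snd = _
  rw [BSPhi_algebraMap]
  rfl

lemma BSderiv_one (f : MvPolynomial (Fin n) ℂ) (i : Fin n) : BSderiv f i 1 = 0 := by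
  show (BSPhi f i 1).snd = 0
  rw [map_one]
  rfl

lemma BSderiv_mul (f : MvPolynomial (Fin n) ℂ) (i : Fin n) (x y : Localization.Away f) :
    BSderiv f i (x * y) = x * BSderiv f i y + BSderiv f i x * y := by
  show (BSPhi f i (x * y)).snd = _
  rw [map_mul, TrivSqZeroExt.snd_mul, BSPhi_fst, BSPhi_fst]
  show x • (BSPhi f i y).snd + (BSPhi f i x).snd * _ = _
  rw [smul_eq_mul]
  show x * BSderiv f i y + BSderiv f i x * y = _
  rfl

/-- The logarithmic derivative, as a monoid homomorphism on units. -/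
def BSlog (f : MvPolynomial (Fin n) ℂ) (i : Fin n) :
    (Localization.Away f)ˣ →* Multiplicative (Localization.Away f) where
  toFun w := Multiplicative.ofAdd ((↑w⁻¹ : Localization.Away f) * BSderiv f i ↑w)
  map_one' := by simp [BSderiv_one]
  map_mul' w v := by
    show Multiplicative.ofAdd ((↑(w * v)⁻¹ : Localization.Away f) * BSderiv f i ↑(w * v))
      = Multiplicative.ofAdd _ * Multiplicative.ofAdd _
    rw [← ofAdd_add]
    congr 1
    have hw : (↑w⁻¹ : Localization.Away f) * ↑w = 1 := Units.inv_mul w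
    have hv : (↑v⁻¹ : Localization.Away f) * ↑v = 1 := Units.inv_mul v
    have h1 : ((↑(w * v)⁻¹ : Localization.Away f)) = ↑v⁻¹ * ↑w⁻¹ := by
      rw [mul_inv_rev, Units.val_mul]
    have h2 : ((↑(w * v) : Localization.Away f)) = ↑w * ↑v := Units.val_mul w v
    rw [h1, h2, BSderiv_mul]
    linear_combination ((↑v⁻¹ : Localization.Away f) * BSderiv f i ↑v) * hw
      + ((↑w⁻¹ : Localization.Away f) * BSderiv f i ↑w) * hv

lemma BSderiv_units (f : MvPolynomial (Fin n) ℂ) (i : Fin n) (w : (Localization.Away f)ˣ) :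
    BSderiv f i ↑w = ↑w * Multiplicative.toAdd (BSlog f i w) := by
  show _ = (↑w : Localization.Away f) * (↑w⁻¹ * BSderiv f i ↑w)
  rw [← mul_assoc, Units.mul_inv, one_mul]

variable (F : Fin r → MvPolynomial (Fin n) ℂ)

lemma BS_isUnit_algebraMap (j : Fin r) :
    IsUnit (algebraMap (MvPolynomial (Fin n) ℂ) (Localization.Away (∏ k, F k)) (F j)) := by
  have h : IsUnit (algebraMap (MvPolynomial (Fin n) ℂ)
      (Localization.Away (∏ k, F k)) (∏ k, F k)) :=
    IsLocalization.Away.algebraMap_isUnit _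
  rw [map_prod] at h
  rw [← Finset.mul_prod_erase Finset.univ
    (fun k => algebraMap (MvPolynomial (Fin n) ℂ) (Localization.Away (∏ k, F k)) (F k))
    (Finset.mem_univ j)] at h
  exact isUnit_of_mul_isUnit_left h

lemma BS_algebraMap_mul_dlog (i : Fin n) (j : Fin r) :
    algebraMap (MvPolynomial (Fin n) ℂ) (Localization.Away (∏ k, F k)) (F j) * BSdlog F i j
      = algebraMap _ _ (pderiv i (F j)) := by
  rw [BSdlog, ← Localization.mk_one_eq_algebraMap, ← Localization.mk_one_eq_algebraMap,
    Localization.mk_mul]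
  have hnum : F j * (pderiv i (F j) * ∏ k ∈ Finset.univ.erase j, F k)
      = pderiv i (F j) * ∏ k, F k := by
    rw [← Finset.mul_prod_erase Finset.univ F (Finset.mem_univ j)]
    ring
  rw [hnum]
  rw [show (1 * (⟨∏ k, F k, Submonoid.mem_powers _⟩ : Submonoid.powers (∏ k, F k)))
    = ⟨∏ k, F k, Submonoid.mem_powers _⟩ from one_mul _]
  rw [show (pderiv i (F j) * ∏ k, F k) = pderiv i (F j) * ∏ k, F k from rfl]
  rw [← one_mul (⟨∏ k, F k, Submonoid.mem_powers _⟩ : Submonoid.powers (∏ k, F k)),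
    ← Localization.mk_mul,
    Localization.mk_self (⟨∏ k, F k, Submonoid.mem_powers _⟩ : Submonoid.powers (∏ k, F k)),
    mul_one]

lemma BSlog_unit (i : Fin n) (j : Fin r) :
    Multiplicative.toAdd (BSlog (∏ k, F k) i (BS_isUnit_algebraMap F j).unit) = BSdlog F i j := by
  have hu : ((BS_isUnit_algebraMap F j).unit : Localization.Away (∏ k, F k))
      = algebraMap _ _ (F j) := (BS_isUnit_algebraMap F j).unit_spec
  have key := Units.inv_mul_cancel_left (BS_isUnit_algebraMap F j).unit (BSdlog F i j)
  rw [hu] at key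
  show (↑(BS_isUnit_algebraMap F j).unit⁻¹ : Localization.Away (∏ k, F k))
      * BSderiv _ i ↑(BS_isUnit_algebraMap F j).unit = _
  rw [hu, BSderiv_algebraMap, ← BS_algebraMap_mul_dlog F i j]
  exact key

variable (m : Fin r → ℕ)

/-- The unit `f₁^{-m₁}⋯f_r^{-m_r}` of `R_f`. -/
def BSuu : (Localization.Away (∏ k, F k))ˣ :=
  ∏ j, ((BS_isUnit_algebraMap F j).unit)⁻¹ ^ m j

lemma BSuu_inv_val :
    ((BSuu F m)⁻¹ : (Localization.Away (∏ k, F k))ˣ).val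
      = algebraMap _ _ (∏ j, F j ^ m j) := by
  have h1 : (BSuu F m)⁻¹ = ∏ j, ((BS_isUnit_algebraMap F j).unit) ^ m j := by
    rw [BSuu, ← Finset.prod_inv_distrib]
    exact Finset.prod_congr rfl fun j _ => by rw [← inv_pow, inv_inv]
  rw [h1, ← Units.coeHom_apply, map_prod, map_prod]
  refine Finset.prod_congr rfl fun j _ => ?_
  rw [map_pow, map_pow, Units.coeHom_apply, (BS_isUnit_algebraMap F j).unit_spec]

lemma BSderiv_uu (i : Fin n) :
    BSderiv (∏ k, F k) i ↑(BSuu F m)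
      = ↑(BSuu F m) * ∑ j, (m j) • (-(BSdlog F i j)) := by
  rw [BSderiv_units (∏ k, F k) i (BSuu F m)]
  congr 1
  rw [BSuu, map_prod, toAdd_prod]
  refine Finset.sum_congr rfl fun j _ => ?_
  rw [map_pow, map_inv, toAdd_pow, toAdd_inv, BSlog_unit]

/-- The evaluation `s_j ↦ -m_j` on `M = R_f[s₁,…,s_r]`. -/
def BSev : BSModule r (∏ k, F k) →ₐ[Localization.Away (∏ k, F k)] Localization.Away (∏ k, F k) :=
  aeval fun j => algebraMap ℂ _ (-(m j : ℂ))

/-- The map `Φ : M → R_f`, `g(s) ↦ f^{-m}·g(-m)`. -/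
def BSPhiMap : BSModule r (∏ k, F k) →ₗ[ℂ] Localization.Away (∏ k, F k) :=
  (LinearMap.mulLeft ℂ ((BSuu F m : (Localization.Away (∏ k, F k))ˣ) :
      Localization.Away (∏ k, F k))).comp
    ((BSev F m).toLinearMap.restrictScalars ℂ)

lemma BSPhiMap_apply (z : BSModule r (∏ k, F k)) :
    BSPhiMap F m z = ↑(BSuu F m) * BSev F m z := rfl

lemma coeffwise_monomial (f : MvPolynomial (Fin n) ℂ) (D : Module.End ℂ (Localization.Away f))
    (s : Fin r →₀ ℕ) (a : Localization.Away f) :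
    coeffwise (r := r) f D (monomial s a) = monomial s (D a) := by
  show AddMonoidAlgebra.ofCoeff (Finsupp.mapRange (⇑D) D.map_zero (Finsupp.single s a))
    = AddMonoidAlgebra.ofCoeff (Finsupp.single s (D a))
  exact congrArg _ Finsupp.mapRange_single

lemma BSev_coeffwise (D : Module.End ℂ (Localization.Away (∏ k, F k)))
    (p : BSModule r (∏ k, F k)) :
    BSev F m (coeffwise (r := r) _ D p) = D (BSev F m p) := by
  induction p using MvPolynomial.induction_on' with
  | monomial s a =>
    rw [coeffwise_monomial, BSev, aeval_monomial, aeval_monomial]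
    have hprod : (s.prod fun j e => (algebraMap ℂ (Localization.Away (∏ k, F k)) (-(m j : ℂ))) ^ e)
        = algebraMap ℂ _ (s.prod fun j e => (-(m j : ℂ)) ^ e) := by
      rw [map_finsuppProd]
      exact (Finsupp.prod_congr fun j _ => by rw [map_pow]).symm
    rw [hprod, Algebra.algebraMap_self, RingHom.id_apply, RingHom.id_apply]
    set c := s.prod fun j e => (-(m j : ℂ)) ^ e with hc
    rw [mul_comm (D a) _, mul_comm a _, ← Algebra.smul_def, ← Algebra.smul_def]
    exact (D.map_smul c a).symm
  | add p q hp hq =>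
    rw [map_add, map_add, map_add, map_add, hp, hq]

lemma BSev_map (b : MvPolynomial (Fin r) ℂ) :
    BSev F m (MvPolynomial.map (algebraMap ℂ (Localization.Away (∏ k, F k))) b)
      = algebraMap ℂ _ (eval (fun j => -(m j : ℂ)) b) := by
  have h1 : BSev F m (MvPolynomial.map (algebraMap ℂ (Localization.Away (∏ k, F k))) b)
      = eval (fun j => algebraMap ℂ (Localization.Away (∏ k, F k)) (-(m j : ℂ)))
        (MvPolynomial.map (algebraMap ℂ (Localization.Away (∏ k, F k))) b) := by
    rw [BSev, aeval_def, Algebra.algebraMap_self]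
    rfl
  rw [h1, eval_map]
  have h2 : eval (fun j => -(m j : ℂ)) b
      = eval₂ (RingHom.id ℂ) (fun j => -(m j : ℂ)) b := rfl
  rw [h2, MvPolynomial.eval₂_comp_left (algebraMap ℂ (Localization.Away (∏ k, F k)))
    (RingHom.id ℂ) (fun j => -(m j : ℂ)) b, RingHom.comp_id]
  rfl

/-- The algebra of differential operators on `R_f` (without the `s`-variables). -/
def BSW : Subalgebra ℂ (Module.End ℂ (Localization.Away (∏ k, F k))) :=
  Algebra.adjoin ℂ
    ((Set.range fun a : MvPolynomial (Fin n) ℂ =>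
        LinearMap.mulLeft ℂ (algebraMap _ (Localization.Away (∏ k, F k)) a))
      ∪ (Set.range fun i : Fin n => BSderiv (∏ k, F k) i))

lemma BSW_preserves {P : Module.End ℂ (Localization.Away (∏ k, F k))} (hP : P ∈ BSW F) :
    ∀ x ∈ (IsScalarTower.toAlgHom ℂ (MvPolynomial (Fin n) ℂ)
        (Localization.Away (∏ k, F k))).range,
      P x ∈ (IsScalarTower.toAlgHom ℂ (MvPolynomial (Fin n) ℂ)
        (Localization.Away (∏ k, F k))).range := by
  induction hP using Algebra.adjoin_induction with
  | mem P hP =>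
    rcases hP with ⟨a, rfl⟩ | ⟨i, rfl⟩
    · rintro x ⟨b, rfl⟩
      exact ⟨a * b, by simp [LinearMap.mulLeft_apply]⟩
    · rintro x ⟨b, rfl⟩
      exact ⟨pderiv i b, by simpa using (BSderiv_algebraMap (∏ k, F k) i b).symm⟩
  | algebraMap c =>
    intro x hx
    rw [Module.algebraMap_end_apply]
    exact Subalgebra.smul_mem _ hx c
  | add P Q hP hQ ihP ihQ =>
    intro x hx
    rw [LinearMap.add_apply]
    exact add_mem (ihP x hx) (ihQ x hx)
  | mul P Q hP hQ ihP ihQ =>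
    intro x hx
    exact ihP _ (ihQ x hx)

lemma BS_intertwine {P : Module.End ℂ (BSModule r (∏ k, F k))} (hP : P ∈ BSDalg F) :
    ∃ P' ∈ BSW F, ∀ z, BSPhiMap F m (P z) = P' (BSPhiMap F m z) := by
  induction hP using Algebra.adjoin_induction with
  | mem P hP =>
    rcases hP with (⟨a, rfl⟩ | ⟨j, rfl⟩) | ⟨i, rfl⟩
    · refine ⟨LinearMap.mulLeft ℂ (algebraMap _ _ a),
        Algebra.subset_adjoin (Or.inl ⟨a, rfl⟩), fun z => ?_⟩
      rw [LinearMap.mulLeft_apply, LinearMap.mulLeft_apply, BSPhiMap_apply, BSPhiMap_apply,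
        map_mul]
      rw [show BSev F m (C (algebraMap _ _ a)) = algebraMap _ _ a by
        rw [BSev, aeval_C, Algebra.algebraMap_self, RingHom.id_apply]]
      ring
    · refine ⟨LinearMap.mulLeft ℂ (algebraMap _ _ (C (-(m j : ℂ)) : MvPolynomial (Fin n) ℂ)),
        Algebra.subset_adjoin (Or.inl ⟨C (-(m j : ℂ)), rfl⟩), fun z => ?_⟩
      rw [LinearMap.mulLeft_apply, LinearMap.mulLeft_apply, BSPhiMap_apply, BSPhiMap_apply,
        map_mul]
      rw [show BSev F m (X j : BSModule r (∏ k, F k)) = algebraMap ℂ _ (-(m j : ℂ)) from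
        aeval_X _ j]
      rw [show (algebraMap (MvPolynomial (Fin n) ℂ) (Localization.Away (∏ k, F k))
          (C (-(m j : ℂ)))) = algebraMap ℂ _ (-(m j : ℂ)) by
        rw [IsScalarTower.algebraMap_apply ℂ (MvPolynomial (Fin n) ℂ) (Localization.Away (∏ k, F k))]
        simp]
      ring
    · refine ⟨BSderiv (∏ k, F k) i, Algebra.subset_adjoin (Or.inr ⟨i, rfl⟩), fun z => ?_⟩
      have hnab : BSnabla F i z = coeffwise (r := r) _ (BSderiv (∏ k, F k) i) z
          + (∑ j, (X j : BSModule r (∏ k, F k)) * C (BSdlog F i j)) * z := rfl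
      rw [hnab, map_add, BSPhiMap_apply, BSPhiMap_apply, BSPhiMap_apply,
        map_mul, BSev_coeffwise]
      rw [BSderiv_mul, BSderiv_uu]
      rw [show BSev F m (∑ j, (X j : BSModule r (∏ k, F k)) * C (BSdlog F i j))
          = ∑ j, algebraMap ℂ _ (-(m j : ℂ)) * BSdlog F i j by
        rw [map_sum]
        refine Finset.sum_congr rfl fun j _ => ?_
        rw [map_mul, BSev, aeval_X, aeval_C, Algebra.algebraMap_self, RingHom.id_apply]]
      have hsum : (∑ j, algebraMap ℂ (Localization.Away (∏ k, F k)) (-(m j : ℂ)) * BSdlog F i j)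
          = ∑ j, (m j) • (-(BSdlog F i j)) := by
        refine Finset.sum_congr rfl fun j _ => ?_
        rw [map_neg, map_natCast, nsmul_eq_mul]
        ring
      rw [hsum]
      ring
  | algebraMap c =>
    refine ⟨algebraMap ℂ _ c, Subalgebra.algebraMap_mem _ c, fun z => ?_⟩
    rw [Module.algebraMap_end_apply, Module.algebraMap_end_apply, map_smul]
  | add P Q hP hQ ihP ihQ =>
    obtain ⟨P', hP', hPc⟩ := ihP
    obtain ⟨Q', hQ', hQc⟩ := ihQ
    refine ⟨P' + Q', add_mem hP' hQ', fun z => ?_⟩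
    rw [LinearMap.add_apply, LinearMap.add_apply, map_add, hPc, hQc]
  | mul P Q hP hQ ihP ihQ =>
    obtain ⟨P', hP', hPc⟩ := ihP
    obtain ⟨Q', hQ', hQc⟩ := ihQ
    refine ⟨P' * Q', mul_mem hP' hQ', fun z => ?_⟩
    rw [Module.End.mul_apply, Module.End.mul_apply, hPc, hQc]

end BSaux

open MvPolynomial in
lemma mvPoly_isUnit_eq_C : ∀ {N : ℕ} (p : MvPolynomial (Fin N) ℂ), IsUnit p → ∃ c : ℂ, p = C c
  | 0, p, _ => ⟨p.coeff 0, p.eq_C_of_isEmpty⟩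
  | (N + 1), p, hp => by
    have hep : IsUnit (MvPolynomial.finSuccEquiv ℂ N p) := hp.map _
    obtain ⟨q, hq, hqp⟩ := Polynomial.isUnit_iff.mp hep
    obtain ⟨c, hc⟩ := mvPoly_isUnit_eq_C q hq
    refine ⟨c, (MvPolynomial.finSuccEquiv ℂ N).injective ?_⟩
    rw [← hqp, hc]
    have h2 : (MvPolynomial.finSuccEquiv ℂ N).symm (Polynomial.C (MvPolynomial.C c))
        = MvPolynomial.C c := RingHom.congr_fun (MvPolynomial.finSuccEquiv_comp_C_eq_C N) c
    calc Polynomial.C (MvPolynomial.C c)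
        = MvPolynomial.finSuccEquiv ℂ N
            ((MvPolynomial.finSuccEquiv ℂ N).symm (Polynomial.C (MvPolynomial.C c))) :=
          ((MvPolynomial.finSuccEquiv ℂ N).apply_symm_apply _).symm
      _ = MvPolynomial.finSuccEquiv ℂ N (MvPolynomial.C c) := by rw [h2]

open MvPolynomial in
/-- **Nontriviality of the Bernstein–Sato ideal (consequence of Theorem 4.2(i)).**
For `m ∈ ℕ^r` with `f₁^{m₁}⋯f_r^{m_r}` nonconstant, `B_F^m` is a proper ideal of
`ℂ[s₁,…,s_r]`; equivalently, its zero locus `Z(B_F^m) ⊆ ℂ^r` is nonempty. -/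
theorem generalized_bernstein_sato_ideal_is_proper
    {n r : ℕ} (hn : 1 ≤ n) (hr : 1 ≤ r)
    (F : Fin r → MvPolynomial (Fin n) ℂ) (hF : ∀ j, F j ≠ 0)
    (m : Fin r → ℕ) (hm : ∀ c : ℂ, ∏ j, F j ^ m j ≠ C c) :
    BSideal F m ≠ Set.univ ∧ (zeroLoc (BSideal F m)).Nonempty := by
  classical
  have hf0 : (∏ k, F k) ≠ 0 := Finset.prod_ne_zero_iff.mpr fun j _ => hF j
  set α : Fin r → ℂ := fun j => -(m j : ℂ) with hα
  have key : ∀ b ∈ BSideal F m, eval α b = 0 := by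
    intro b hb
    by_contra hne
    obtain ⟨P, hP, heq⟩ := hb
    obtain ⟨P', hP', hcomm⟩ := BS_intertwine F m hP
    have h1 : BSPhiMap F m (MvPolynomial.map (algebraMap ℂ (Localization.Away (∏ k, F k))) b)
        = P' (BSPhiMap F m (C (algebraMap _ _ (∏ j, F j ^ m j)))) := by
      rw [← heq]
      exact hcomm _
    have h2 : BSPhiMap F m
        (C (algebraMap _ (Localization.Away (∏ k, F k)) (∏ j, F j ^ m j))) = 1 := by
      rw [BSPhiMap_apply]
      rw [show BSev F m (C (algebraMap _ (Localization.Away (∏ k, F k)) (∏ j, F j ^ m j)))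
          = algebraMap _ _ (∏ j, F j ^ m j) by
        rw [BSev, aeval_C, Algebra.algebraMap_self, RingHom.id_apply]]
      rw [← BSuu_inv_val F m]
      exact Units.mul_inv _
    have h3 : BSPhiMap F m (MvPolynomial.map (algebraMap ℂ (Localization.Away (∏ k, F k))) b)
        = ↑(BSuu F m) * algebraMap ℂ _ (eval α b) := by
      rw [BSPhiMap_apply, BSev_map]
    have hmem : ((BSuu F m : (Localization.Away (∏ k, F k))ˣ) : Localization.Away (∏ k, F k))
          * algebraMap ℂ (Localization.Away (∏ k, F k)) (eval α b)
        ∈ (IsScalarTower.toAlgHom ℂ (MvPolynomial (Fin n) ℂ)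
            (Localization.Away (∏ k, F k))).range := by
      rw [← h3, h1, h2]
      exact BSW_preserves F hP' 1 ⟨1, map_one _⟩
    have hc : algebraMap ℂ (Localization.Away (∏ k, F k)) ((eval α b)⁻¹)
        ∈ (IsScalarTower.toAlgHom ℂ (MvPolynomial (Fin n) ℂ)
            (Localization.Away (∏ k, F k))).range := by
      refine ⟨C ((eval α b)⁻¹), ?_⟩
      show algebraMap (MvPolynomial (Fin n) ℂ) (Localization.Away (∏ k, F k))
        (C ((eval α b)⁻¹)) = _
      rw [IsScalarTower.algebraMap_apply ℂ (MvPolynomial (Fin n) ℂ)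
        (Localization.Away (∏ k, F k))]
      simp
    have humem := mul_mem hmem hc
    rw [mul_assoc, ← map_mul, mul_inv_cancel₀ hne, map_one, mul_one] at humem
    obtain ⟨g, hg⟩ := humem
    have h7 : algebraMap (MvPolynomial (Fin n) ℂ) (Localization.Away (∏ k, F k))
        ((∏ j, F j ^ m j) * g)
        = algebraMap (MvPolynomial (Fin n) ℂ) (Localization.Away (∏ k, F k)) 1 := by
      have hg' : algebraMap (MvPolynomial (Fin n) ℂ) (Localization.Away (∏ k, F k)) g
          = ↑(BSuu F m) := hg
      rw [map_mul, map_one, ← BSuu_inv_val F m, hg']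
      exact Units.inv_mul _
    have hinj : Function.Injective
        (algebraMap (MvPolynomial (Fin n) ℂ) (Localization.Away (∏ k, F k))) :=
      IsLocalization.injective _ (powers_le_nonZeroDivisors_of_noZeroDivisors hf0)
    obtain ⟨c, hcc⟩ := mvPoly_isUnit_eq_C _ (IsUnit.of_mul_eq_one _ (hinj h7))
    exact hm c hcc
  refine ⟨?_, ⟨α, fun b hb => key b hb⟩⟩
  intro hU
  have h1 := key 1 (by rw [hU]; trivial)
  rw [map_one] at h1
  exact one_ne_zero h1
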